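/- Let n > 2, let V = 𝔽₂ⁿ, and let W ≤ V be a fixed subspace with dim(W) = n − 2. Then Sym(V) contains exactly 2^{n−2} − 1 elementary abelian regular subgroups T' such that T ∩ T' = σ_W. -/

import Mathlib

open Equiv

/-- `V n` is the `n`-dimensional vector space over the field with two elements. -/
abbrev V (n : ℕ) : Type := Fin n → ZMod 2

/-- The subgroup `σ_W` of `Sym(V)` consisting of the translations `x ↦ x + w` with `w ∈ W`. -/
def sigmaSub (n : ℕ) (W : Submodule (ZMod 2) (V n)) : Subgroup (Equiv.Perm (V n)) where
  carrier := {g | ∃ v ∈ W, ∀ x, g x = x + v}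
  one_mem' := ⟨0, W.zero_mem, fun x => by simp⟩
  mul_mem' := by
    rintro a b ⟨v, hv, ha⟩ ⟨w, hw, hb⟩
    exact ⟨w + v, W.add_mem hw hv, fun x => by
      simp [Equiv.Perm.mul_apply, ha, hb, add_assoc]⟩
  inv_mem' := by
    rintro a ⟨v, hv, ha⟩
    refine ⟨-v, W.neg_mem hv, fun x => a.injective ?_⟩
    rw [show a (a⁻¹ x) = x from a.apply_symm_apply x, ha]
    abel

/-- The translation group `T`, i.e. the image of the right regular representation
of `(V, +)` in `Sym(V)`. -/
def T (n : ℕ) : Subgroup (Equiv.Perm (V n)) := sigmaSub n ⊤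

/-- The affine group `AGL(V) = T ⋊ GL(V)`, consisting of the invertible affine
transformations `x ↦ L x + v` of `V`. -/
def AGL (n : ℕ) : Subgroup (Equiv.Perm (V n)) where
  carrier := {g | ∃ (L : V n ≃ₗ[ZMod 2] V n) (v : V n), ∀ x, g x = L x + v}
  one_mem' := ⟨LinearEquiv.refl _ _, 0, fun x => by simp⟩
  mul_mem' := by
    rintro a b ⟨L, v, ha⟩ ⟨M, w, hb⟩
    exact ⟨M ≪≫ₗ L, L w + v, fun x => by
      simp [Equiv.Perm.mul_apply, ha, hb, map_add, add_assoc]⟩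
  inv_mem' := by
    rintro a ⟨L, v, ha⟩
    refine ⟨L.symm, -(L.symm v), fun x => a.injective ?_⟩
    rw [show a (a⁻¹ x) = x from a.apply_symm_apply x, ha, map_add, map_neg, LinearEquiv.apply_symm_apply,
      LinearEquiv.apply_symm_apply]
    abel

/-- The conjugate subgroup `H^g = g⁻¹ H g`. -/
def conjSub {G : Type*} [Group G] (H : Subgroup G) (g : G) : Subgroup G :=
  H.map (MulAut.conj g⁻¹).toMonoidHom

/-- A subgroup of `Sym(V)` is an elementary abelian regular subgroup if it is an
elementary abelian 2-group (every element squares to the identity) acting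
regularly (sharply transitively) on `V`. -/
def IsElemAbelianRegular (n : ℕ) (R : Subgroup (Equiv.Perm (V n))) : Prop :=
  (∀ r ∈ R, r * r = 1) ∧ ∀ x y : V n, ∃! r : R, (r : Equiv.Perm (V n)) x = y

/-- `A` is a normal subgroup of `B` (as subgroups of a common ambient group). -/
def NormalIn {G : Type*} [Group G] (A B : Subgroup G) : Prop :=
  A ≤ B ∧ ∀ b ∈ B, ∀ a ∈ A, b * a * b⁻¹ ∈ A

/-- `S` is a Sylow `2`-subgroup of `K` (as subgroups of a common ambient group):
`S` is a `2`-subgroup of `K` maximal among the `2`-subgroups of `K`. -/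
def IsSylow2Of {G : Type*} [Group G] (S K : Subgroup G) : Prop :=
  S ≤ K ∧ IsPGroup 2 S ∧ ∀ Q : Subgroup G, Q ≤ K → IsPGroup 2 Q → S ≤ Q → Q = S

namespace CardEAR
variable {n : ℕ}
lemma zmod2_add_self (x : ZMod 2) : x + x = 0 := by fin_cases x <;> rfl
lemma zmod2_eq {u v : ZMod 2} (h : u + v = 0) : u = v := by
  have h2 : ∀ u v : ZMod 2, u + v = 0 → u = v := by decide
  exact h2 u v h

lemma vadd_self (u : V n) : u + u = 0 := funext fun i => zmod2_add_self (u i)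
lemma smul_add_self (s : ZMod 2) (u : V n) : s • u + s • u = 0 := by
  rw [← add_smul, zmod2_add_self, zero_smul]
def tfun (f g : V n →ₗ[ZMod 2] ZMod 2) (c v : V n) : V n → V n :=
  fun y => y + v + (f v * g y + f y * g v) • c
lemma f_tfun (f g : V n →ₗ[ZMod 2] ZMod 2) {c : V n} (hfc : f c = 0) (v y : V n) :
    f (tfun f g c v y) = f y + f v := by
  simp [tfun, map_add, map_smul, hfc, smul_eq_mul]
lemma g_tfun (f g : V n →ₗ[ZMod 2] ZMod 2) {c : V n} (hgc : g c = 0) (v y : V n) :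
    g (tfun f g c v y) = g y + g v := by
  simp [tfun, map_add, map_smul, hgc, smul_eq_mul]
lemma tfun_invol (f g : V n →ₗ[ZMod 2] ZMod 2) {c : V n} (hfc : f c = 0) (hgc : g c = 0)
    (v y : V n) : tfun f g c v (tfun f g c v y) = y := by
  have h1 : f v * g (tfun f g c v y) + f (tfun f g c v y) * g v
      = (f v * g y + f y * g v) + (f v * g v + f v * g v) := by
    rw [f_tfun f g hfc, g_tfun f g hgc]; ring
  conv_lhs => rw [tfun, h1]
  rw [zmod2_add_self, add_zero]
  show tfun f g c v y + v + (f v * g y + f y * g v) • c = y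
  rw [tfun]; abel_nf
  rw [two_smul, two_smul, vadd_self, smul_add_self]; abel

/-- The twisted translation as a permutation. -/
def tperm (f g : V n →ₗ[ZMod 2] ZMod 2) (c : V n) (hfc : f c = 0) (hgc : g c = 0)
    (v : V n) : Perm (V n) :=
  ⟨tfun f g c v, tfun f g c v, tfun_invol f g hfc hgc v, tfun_invol f g hfc hgc v⟩

variable (f g : V n →ₗ[ZMod 2] ZMod 2) {c : V n} (hfc : f c = 0) (hgc : g c = 0)

lemma tperm_apply (v y : V n) :
    tperm f g c hfc hgc v y = y + v + (f v * g y + f y * g v) • c := rfl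

lemma tperm_zero : tperm f g c hfc hgc 0 = 1 := by
  refine Equiv.ext fun y => by simp [tperm_apply]

lemma tperm_mul (v w : V n) :
    tperm f g c hfc hgc v * tperm f g c hfc hgc w
      = tperm f g c hfc hgc (v + w + (f v * g w + f w * g v) • c) := by
  refine Equiv.ext fun y => ?_
  rw [Perm.mul_apply, tperm_apply, tperm_apply, tperm_apply]
  simp only [map_add, map_smul, hfc, hgc, smul_eq_mul, mul_zero, add_zero, zero_mul]
  match_scalars <;> ring

lemma tperm_inv (v : V n) :
    (tperm f g c hfc hgc v)⁻¹ = tperm f g c hfc hgc v := by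
  refine Equiv.ext fun y => rfl

lemma tperm_sq (v : V n) :
    tperm f g c hfc hgc v * tperm f g c hfc hgc v = 1 := by
  refine Equiv.ext fun y => tfun_invol f g hfc hgc v y

lemma tperm_inj : Function.Injective (tperm f g c hfc hgc) := by
  intro v w h
  have h0 : v = w := by
    have := congrArg (fun p : Perm (V n) => p 0) h
    simpa [tperm_apply] using this
  exact h0

/-- The subgroup of all twisted translations. -/
def Rsub : Subgroup (Perm (V n)) where
  carrier := {p | ∃ v, p = tperm f g c hfc hgc v}
  one_mem' := ⟨0, (tperm_zero f g hfc hgc).symm⟩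
  mul_mem' := by
    rintro p q ⟨v, rfl⟩ ⟨w, rfl⟩
    exact ⟨_, tperm_mul f g hfc hgc v w⟩
  inv_mem' := by
    rintro p ⟨v, rfl⟩
    exact ⟨v, tperm_inv f g hfc hgc v⟩

lemma mem_Rsub {p : Perm (V n)} :
    p ∈ Rsub f g hfc hgc ↔ ∃ v, p = tperm f g c hfc hgc v := Iff.rfl


section Forward

lemma isEAR_Rsub : (∀ r ∈ Rsub f g hfc hgc, r * r = 1) ∧
    ∀ x y : V n, ∃! r : Rsub f g hfc hgc, (r : Perm (V n)) x = y := by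
  constructor
  · rintro r ⟨v, rfl⟩; exact tperm_sq f g hfc hgc v
  · intro x y
    set d := y - x with hd
    refine ⟨⟨tperm f g c hfc hgc (d + (f d * g x + f x * g d) • c), ⟨_, rfl⟩⟩, ?_, ?_⟩
    · show tfun f g c (d + (f d * g x + f x * g d) • c) x = y
      rw [tfun]
      have hf : f (d + (f d * g x + f x * g d) • c) = f d := by
        simp [map_add, map_smul, hfc]
      have hg : g (d + (f d * g x + f x * g d) • c) = g d := by
        simp [map_add, map_smul, hgc]
      rw [hf, hg]
      have h1 : x + (d + (f d * g x + f x * g d) • c) + (f d * g x + f x * g d) • c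
          = x + d + ((f d * g x + f x * g d) • c + (f d * g x + f x * g d) • c) := by abel
      rw [h1, smul_add_self, add_zero, hd]
      abel
    · rintro ⟨r, v, rfl⟩ hr
      have hr' : x + v + (f v * g x + f x * g v) • c = y := hr
      have hfv : f v = f d := by
        have := congrArg f hr'
        simp only [map_add, map_smul, hfc, smul_eq_mul, mul_zero, add_zero, hd, map_sub] at this ⊢
        linear_combination this
      have hgv : g v = g d := by
        have := congrArg g hr'
        simp only [map_add, map_smul, hgc, smul_eq_mul, mul_zero, add_zero, hd, map_sub] at this ⊢
        linear_combination this
      have hv : v = d + (f d * g x + f x * g d) • c := by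
        have hv' : v = y - x - (f v * g x + f x * g v) • c := by
          rw [← hr']; abel
        have hneg : -((f d * g x + f x * g d) • c) = (f d * g x + f x * g d) • c :=
          neg_eq_of_add_eq_zero_left (smul_add_self _ _)
        rw [hv', hfv, hgv, ← hd, sub_eq_add_neg, hneg]
      subst hv; rfl

variable {W : Submodule (ZMod 2) (V n)}

lemma inter_Rsub (hW : ∀ x, x ∈ W ↔ f x = 0 ∧ g x = 0)
    {a b : V n} (hfa : f a = 1) (hga : g a = 0) (hfb : f b = 0) (hgb : g b = 1)
    (hcW : c ∈ W) (hc0 : c ≠ 0) :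
    T n ⊓ Rsub f g hfc hgc = sigmaSub n W := by
  ext p
  rw [Subgroup.mem_inf]
  constructor
  · rintro ⟨⟨u, -, hu⟩, v, rfl⟩
    have h0 : v = u := by
      have := hu 0
      simpa [tperm_apply] using this
    subst h0
    have hs : ∀ x : V n, (f v * g x + f x * g v) • c = 0 := by
      intro x
      have h := hu x
      rw [tperm_apply] at h
      calc (f v * g x + f x * g v) • c
          = x + v + (f v * g x + f x * g v) • c - (x + v) := by abel
        _ = 0 := by rw [h]; abel
    have hzero : ∀ x : V n, f v * g x + f x * g v = 0 := by
      intro x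
      by_contra hne
      have h1 : f v * g x + f x * g v = 1 := by
        have : ∀ s : ZMod 2, s ≠ 0 → s = 1 := by decide
        exact this _ hne
      have := hs x
      rw [h1, one_smul] at this
      exact hc0 this
    have hgv : g v = 0 := by
      have := hzero a; rw [hfa, hga] at this; simpa using this
    have hfv : f v = 0 := by
      have := hzero b; rw [hfb, hgb] at this; simpa using this
    refine ⟨v, (hW v).2 ⟨hfv, hgv⟩, fun x => ?_⟩
    rw [tperm_apply, hfv, hgv, zero_mul, mul_zero, add_zero, zero_smul, add_zero]
  · rintro ⟨w, hw, hpw⟩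
    obtain ⟨hfw, hgw⟩ := (hW w).1 hw
    have hp : p = tperm f g c hfc hgc w := by
      refine Equiv.ext fun y => ?_
      rw [hpw y, tperm_apply, hfw, hgw, zero_mul, mul_zero, add_zero, zero_smul, add_zero]
    exact ⟨⟨w, trivial, hpw⟩, ⟨w, hp⟩⟩

end Forward

lemma exists_fg (hn : 2 < n) (W : Submodule (ZMod 2) (V n))
    (hdim : Module.finrank (ZMod 2) W = n - 2) :
    ∃ f g : V n →ₗ[ZMod 2] ZMod 2,
      (∀ x, x ∈ W ↔ f x = 0 ∧ g x = 0) ∧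
      (∃ a, f a = 1 ∧ g a = 0) ∧ (∃ b, f b = 0 ∧ g b = 1) := by
  have hV : Module.finrank (ZMod 2) (V n) = n := by
    simp [Module.finrank_pi]
  have hq : Module.finrank (ZMod 2) (V n ⧸ W) = 2 := by
    have h := Submodule.finrank_quotient_add_finrank W
    rw [hdim, hV] at h
    omega
  have h2 : Module.finrank (ZMod 2) (Fin 2 → ZMod 2) = 2 := by
    simp [Module.finrank_pi]
  obtain ⟨e⟩ : Nonempty ((V n ⧸ W) ≃ₗ[ZMod 2] (Fin 2 → ZMod 2)) :=
    FiniteDimensional.nonempty_linearEquiv_of_finrank_eq (hq.trans h2.symm)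
  refine ⟨(LinearMap.proj 0).comp (e.toLinearMap.comp W.mkQ),
         (LinearMap.proj 1).comp (e.toLinearMap.comp W.mkQ), ?_, ?_, ?_⟩
  · intro x
    simp only [LinearMap.comp_apply, LinearMap.proj_apply, LinearEquiv.coe_coe]
    constructor
    · intro hx
      have : W.mkQ x = 0 := (Submodule.Quotient.mk_eq_zero W).2 hx
      rw [this, map_zero]; exact ⟨rfl, rfl⟩
    · rintro ⟨h0, h1⟩
      have he : e (W.mkQ x) = 0 := by
        funext i
        fin_cases i
        · exact h0
        · exact h1
      have : W.mkQ x = 0 := by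
        have := congrArg e.symm he
        simpa using this
      exact (Submodule.Quotient.mk_eq_zero W).1 this
  · obtain ⟨xa, hxa⟩ := W.mkQ_surjective (e.symm ![1, 0])
    refine ⟨xa, ?_, ?_⟩ <;>
      simp [LinearMap.comp_apply, hxa]
  · obtain ⟨xb, hxb⟩ := W.mkQ_surjective (e.symm ![0, 1])
    refine ⟨xb, ?_, ?_⟩ <;>
      simp [LinearMap.comp_apply, hxb]

section Classify

variable {W : Submodule (ZMod 2) (V n)}

lemma cancel_left (x y : V n) : x + (x + y) = y := by
  rw [← add_assoc, vadd_self, zero_add]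

lemma cancel_left' (x y : V n) : x + (y + x) = y := by
  rw [add_comm y x, cancel_left]

lemma classify (hW : ∀ x, x ∈ W ↔ f x = 0 ∧ g x = 0)
    {a b : V n} (hfa : f a = 1) (hga : g a = 0) (hfb : f b = 0) (hgb : g b = 1)
    (R : Subgroup (Perm (V n)))
    (h1 : ∀ r ∈ R, r * r = 1)
    (h2 : ∀ x y : V n, ∃! r : R, (r : Perm (V n)) x = y)
    (hint : T n ⊓ R = sigmaSub n W) :
    ∃ c, ∃ hcW : c ∈ W, c ≠ 0 ∧
      R = Rsub f g ((hW c).1 hcW).1 ((hW c).1 hcW).2 := by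
  classical
  -- R is abelian
  have h1' : ∀ r : R, r * r = 1 := fun r => Subtype.ext (h1 r r.2)
  have hinv : ∀ r : R, r⁻¹ = r := fun r => inv_eq_of_mul_eq_one_right (h1' r)
  have habel : ∀ r s : R, r * s = s * r := by
    intro r s
    calc r * s = (r * s)⁻¹ := (inv_eq_of_mul_eq_one_right (h1' (r * s))).symm
      _ = s⁻¹ * r⁻¹ := mul_inv_rev r s
      _ = s * r := by rw [hinv, hinv]
  -- the canonical parametrization of R
  set ρ : V n → R := fun x => (h2 0 x).choose with hρ
  have hρ0 : ∀ x, (ρ x : Perm (V n)) 0 = x := fun x => (h2 0 x).choose_spec.1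
  have hρu : ∀ x (r : R), (r : Perm (V n)) 0 = x → r = ρ x :=
    fun x r h => (h2 0 x).choose_spec.2 r h
  set op : V n → V n → V n := fun x y => (ρ x : Perm (V n)) y with hop
  have hρmul : ∀ x y, ρ x * ρ y = ρ (op x y) := by
    intro x y
    refine hρu _ _ ?_
    show (ρ x : Perm (V n)) ((ρ y : Perm (V n)) 0) = op x y
    rw [hρ0]
  have hop0 : ∀ x, op 0 x = x := by
    intro x
    have h10 : ((1 : R) : Perm (V n)) 0 = 0 := rfl
    have : (1 : R) = ρ 0 := hρu 0 1 h10
    show (ρ 0 : Perm (V n)) x = x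
    rw [← this]
    rfl
  have hcomm : ∀ x y, op x y = op y x := by
    intro x y
    have e1 : op x y = ((ρ x * ρ y : R) : Perm (V n)) 0 := by
      rw [Subgroup.coe_mul, Perm.mul_apply, hρ0]
    have e2 : op y x = ((ρ y * ρ x : R) : Perm (V n)) 0 := by
      rw [Subgroup.coe_mul, Perm.mul_apply, hρ0]
    rw [e1, e2, habel]
  have hassoc : ∀ x y z, op (op x y) z = op x (op y z) := by
    intro x y z
    show (ρ (op x y) : Perm (V n)) z = (ρ x : Perm (V n)) ((ρ y : Perm (V n)) z)
    rw [← hρmul, Subgroup.coe_mul, Perm.mul_apply]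
  have hself : ∀ x, op x x = 0 := by
    intro x
    calc op x x = ((ρ x * ρ x : R) : Perm (V n)) 0 := by
          rw [Subgroup.coe_mul, Perm.mul_apply, hρ0]
      _ = 0 := by rw [h1' (ρ x)]; rfl
  have hcancelρ : ∀ x {r s : R}, ρ x * r = ρ x * s → r = s := by
    intro x r s h
    exact mul_left_cancel h
  -- translations in R
  have hLw : ∀ w ∈ W, ∀ y, op w y = y + w := by
    intro w hw y
    have hmem : Equiv.addRight w ∈ R := by
      have : Equiv.addRight w ∈ sigmaSub n W := ⟨w, hw, fun x => rfl⟩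
      rw [← hint] at this
      exact this.2
    have h0 : ((⟨Equiv.addRight w, hmem⟩ : R) : Perm (V n)) 0 = w := by simp
    have : (⟨Equiv.addRight w, hmem⟩ : R) = ρ w := hρu w _ h0
    show (ρ w : Perm (V n)) y = y + w
    rw [← this]
    rfl
  have hopW : ∀ x w, w ∈ W → op x w = x + w := by
    intro x w hw
    rw [hcomm, hLw w hw x]
  have hshift : ∀ w ∈ W, ∀ x y, op (x + w) y = op x y + w := by
    intro w hw x y
    have hx : x + w = op w x := (hLw w hw x).symm
    rw [hx, hassoc, hLw w hw]
  -- membership in W via f and g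
  have hWmem : ∀ x : V n, f x = 0 → g x = 0 → x ∈ W := fun x h h' => (hW x).2 ⟨h, h'⟩
  have hsum : ∀ x y : V n, f x = f y → g x = g y → x + y ∈ W := by
    intro x y hf hg
    refine hWmem _ ?_ ?_ <;> simp [map_add, hf, hg, zmod2_add_self]
  -- additivity of f and g with respect to op
  have claimA : ∀ x y : V n, f (op x y) = f x + f y ∧ g (op x y) = g x + g y := by
    intro x y
    by_cases hx : x ∈ W
    · rw [hLw x hx y]
      obtain ⟨hf0, hg0⟩ := (hW x).1 hx
      constructor <;> simp [map_add, hf0, hg0, add_comm]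
    · by_cases hy : y ∈ W
      · rw [hopW x y hy]
        constructor <;> simp [map_add]
      · by_cases hxy : f x = f y ∧ g x = g y
        · -- equal classes
          have hw : x + y ∈ W := hsum x y hxy.1 hxy.2
          have hyx : y = op x (x + y) := by
            rw [hopW x (x + y) hw]
            exact (cancel_left x y).symm
          have : op x y = x + y := by
            conv_lhs => rw [hyx]
            rw [← hassoc, hself, hop0]
          rw [this]
          obtain ⟨hf, hg⟩ := hxy
          constructor
          · rw [map_add]
          · rw [map_add]
        · -- distinct nonzero classes
          set z := op x y with hz
          have hxyW : x + y ∉ W := by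
            intro hw
            obtain ⟨hf0, hg0⟩ := (hW _).1 hw
            rw [map_add] at hf0 hg0
            exact hxy ⟨zmod2_eq hf0, zmod2_eq hg0⟩
          have e0 : ρ x * ρ y = ρ z := by rw [hρmul, ← hz]
          have hzW : z ∉ W := by
            intro hzw
            have e2 : ρ x * (ρ x * ρ y) = ρ x * ρ z := by rw [e0]
            rw [← mul_assoc, h1' (ρ x), one_mul, hρmul] at e2
            have hy2 : y = op x z := by
              have := congrArg (fun r : R => (r : Perm (V n)) 0) e2
              simpa [hρ0] using this
            rw [hopW x z hzw] at hy2
            have hxyz : x + y ∈ W := by rw [hy2, cancel_left]; exact hzw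
            exact hxyW hxyz
          have hzx : z + x ∉ W := by
            intro hzw
            have hzeq : z = op x (z + x) := by
              rw [hopW x (z + x) hzw]
              exact (cancel_left' x z).symm
            have e1 : ρ x * ρ y = ρ x * ρ (z + x) := by
              calc ρ x * ρ y = ρ z := e0
                _ = ρ (op x (z + x)) := by rw [← hzeq]
                _ = ρ x * ρ (z + x) := (hρmul _ _).symm
            have h' := hcancelρ x e1
            have : y = z + x := by
              have := congrArg (fun r : R => (r : Perm (V n)) 0) h'
              simpa [hρ0] using this
            rw [this] at hy
            exact hy hzw
          have hzy : z + y ∉ W := by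
            intro hzw
            have hzeq : z = op y (z + y) := by
              rw [hopW y (z + y) hzw]
              exact (cancel_left' y z).symm
            have e1 : ρ y * ρ x = ρ y * ρ (z + y) := by
              calc ρ y * ρ x = ρ (op y x) := hρmul y x
                _ = ρ z := by rw [← hcomm, ← hz]
                _ = ρ (op y (z + y)) := by rw [← hzeq]
                _ = ρ y * ρ (z + y) := (hρmul _ _).symm
            have h' := hcancelρ y e1
            have : x = z + y := by
              have := congrArg (fun r : R => (r : Perm (V n)) 0) h'
              simpa [hρ0] using this
            rw [this] at hx
            exact hx hzw
          -- now a finite check in (ZMod 2)²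
          have key : ∀ u v w : ZMod 2 × ZMod 2, u ≠ 0 → v ≠ 0 → u + v ≠ 0 →
              w ≠ 0 → w + u ≠ 0 → w + v ≠ 0 → w = u + v := by decide
          have hmem0 : ∀ t : V n, ((f t, g t) : ZMod 2 × ZMod 2) = 0 ↔ t ∈ W := by
            intro t
            rw [hW t, Prod.ext_iff]
            simp
          have hadd : ∀ s t : V n, ((f (s + t), g (s + t)) : ZMod 2 × ZMod 2)
              = (f s, g s) + (f t, g t) := by
            intro s t
            simp [map_add, Prod.ext_iff]
          have hk := key (f x, g x) (f y, g y) (f z, g z)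
            (fun h => hx ((hmem0 x).1 h))
            (fun h => hy ((hmem0 y).1 h))
            (by rw [← hadd]; exact fun h => hxyW ((hmem0 _).1 h))
            (fun h => hzW ((hmem0 z).1 h))
            (by rw [← hadd]; exact fun h => hzx ((hmem0 _).1 h))
            (by rw [← hadd]; exact fun h => hzy ((hmem0 _).1 h))
          rw [Prod.ext_iff] at hk
          exact ⟨hk.1, hk.2⟩
  -- the structure constant
  set ab := op a b with hab
  set cc := ab + a + b with hcc
  have hfab : f ab = 1 := by
    rw [hab, (claimA a b).1, hfa, hfb, add_zero]
  have hgab : g ab = 1 := by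
    rw [hab, (claimA a b).2, hga, hgb, zero_add]
  have hccW : cc ∈ W := by
    refine hWmem _ ?_ ?_
    · rw [hcc, map_add, map_add, hfab, hfa, hfb]; decide
    · rw [hcc, map_add, map_add, hgab, hga, hgb]; decide
  -- reduction to representatives
  have hred : ∀ x y x' y' : V n, f x = f x' → g x = g x' → f y = f y' → g y = g y' →
      op x y = op x' y' + (x + x') + (y + y') := by
    intro x y x' y' hf1 hg1 hf2 hg2
    have hw1 : x + x' ∈ W := hsum _ _ hf1 hg1
    have hw2 : y + y' ∈ W := hsum _ _ hf2 hg2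
    have hx' : x' + (x + x') = x := by rw [add_comm x x']; exact cancel_left x' x
    have hy' : y' + (y + y') = y := by rw [add_comm y y']; exact cancel_left y' y
    calc op x y = op (x' + (x + x')) y := by rw [hx']
      _ = op x' y + (x + x') := by rw [hshift _ hw1]
      _ = op y x' + (x + x') := by rw [hcomm]
      _ = op (y' + (y + y')) x' + (x + x') := by rw [hy']
      _ = op y' x' + (y + y') + (x + x') := by rw [hshift _ hw2]
      _ = op x' y' + (x + x') + (y + y') := by rw [hcomm y' x']; abel
  have hab_eq : op a b = a + b + cc := by
    rw [← hab]
    have h : a + b + cc = ab + (a + a) + (b + b) := by rw [hcc]; abel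
    rw [h, vadd_self, vadd_self, add_zero, add_zero]
  have ha_ab : op a ab = a + ab + cc := by
    have h1 : op a ab = b := by rw [hab, ← hassoc, hself, hop0]
    have h2 : a + ab + cc = b + (a + a) + (ab + ab) := by rw [hcc]; abel
    rw [h1, h2, vadd_self, vadd_self, add_zero, add_zero]
  have hb_ab : op b ab = b + ab + cc := by
    have h1 : op b ab = a := by rw [hab, hcomm a b, ← hassoc, hself, hop0]
    have h2 : b + ab + cc = a + (b + b) + (ab + ab) := by rw [hcc]; abel
    rw [h1, h2, vadd_self, vadd_self, add_zero, add_zero]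
  -- the main formula
  have h01 : ∀ s : ZMod 2, s = 0 ∨ s = 1 := by decide
  have S0x : ∀ x y : V n, f x = 0 → g x = 0 →
      op x y = x + y + (f x * g y + f y * g x) • cc := by
    intro x y h h'
    rw [hLw x (hWmem x h h') y, h, h', zero_mul, mul_zero, add_zero, zero_smul,
      add_zero, add_comm]
  have S0y : ∀ x y : V n, f y = 0 → g y = 0 →
      op x y = x + y + (f x * g y + f y * g x) • cc := by
    intro x y h h'
    rw [hopW x y (hWmem y h h'), h, h', mul_zero, zero_mul, add_zero, zero_smul, add_zero]
  have Seq : ∀ x y : V n, f x = f y → g x = g y →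
      op x y = x + y + (f x * g y + f y * g x) • cc := by
    intro x y hf hg
    have hcoef : f x * g y + f y * g x = 0 := by
      rw [← hf, ← hg, zmod2_add_self]
    have hw := hsum x y hf hg
    have hyx : y = op x (x + y) := by
      rw [hopW x (x + y) hw]
      exact (cancel_left x y).symm
    have hxy' : op x y = x + y := by
      conv_lhs => rw [hyx]
      rw [← hassoc, hself, hop0]
    rw [hxy', hcoef, zero_smul, add_zero]
  have Sd : ∀ x y x' y' : V n, f x = f x' → g x = g x' → f y = f y' → g y = g y' →
      op x' y' = x' + y' + cc → f x' * g y' + f y' * g x' = 1 →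
      op x y = x + y + (f x * g y + f y * g x) • cc := by
    intro x y x' y' hf1 hg1 hf2 hg2 hrep hco
    have hcoef : f x * g y + f y * g x = 1 := by rw [hf1, hg1, hf2, hg2, hco]
    rw [hred x y x' y' hf1 hg1 hf2 hg2, hrep, hcoef, one_smul]
    have h : x' + y' + cc + (x + x') + (y + y') = x + y + cc + (x' + x') + (y' + y') := by
      abel
    rw [h, vadd_self, vadd_self, add_zero, add_zero]
  have hfor : ∀ x y : V n, op x y = x + y + (f x * g y + f y * g x) • cc := by
    intro x y
    rcases h01 (f x) with hfx | hfx <;> rcases h01 (g x) with hgx | hgx <;>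
      rcases h01 (f y) with hfy | hfy <;> rcases h01 (g y) with hgy | hgy <;>
      first
      | exact S0x x y hfx hgx
      | exact S0y x y hfy hgy
      | exact Seq x y (hfx.trans hfy.symm) (hgx.trans hgy.symm)
      | exact Sd x y a b (hfx.trans hfa.symm) (hgx.trans hga.symm) (hfy.trans hfb.symm)
          (hgy.trans hgb.symm) hab_eq (by rw [hfa, hga, hfb, hgb]; decide)
      | exact Sd x y b a (hfx.trans hfb.symm) (hgx.trans hgb.symm) (hfy.trans hfa.symm)
          (hgy.trans hga.symm) (by rw [hcomm b a, hab_eq]; abel) (by rw [hfa, hga, hfb, hgb]; decide)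
      | exact Sd x y a ab (hfx.trans hfab.symm) (hgx.trans hgab.symm) (hfy.trans hfab.symm)
          (hgy.trans hgab.symm) ha_ab (by rw [hfa, hga, hfab, hgab]; decide)
      | exact Sd x y a ab (hfx.trans hfa.symm) (hgx.trans hga.symm) (hfy.trans hfab.symm)
          (hgy.trans hgab.symm) ha_ab (by rw [hfa, hga, hfab, hgab]; decide)
      | exact Sd x y ab a (hfx.trans hfab.symm) (hgx.trans hgab.symm) (hfy.trans hfa.symm)
          (hgy.trans hga.symm) (by rw [hcomm ab a, ha_ab]; abel) (by rw [hfa, hga, hfab, hgab]; decide)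
      | exact Sd x y b ab (hfx.trans hfb.symm) (hgx.trans hgb.symm) (hfy.trans hfab.symm)
          (hgy.trans hgab.symm) hb_ab (by rw [hfb, hgb, hfab, hgab]; decide)
      | exact Sd x y ab b (hfx.trans hfab.symm) (hgx.trans hgab.symm) (hfy.trans hfb.symm)
          (hgy.trans hgb.symm) (by rw [hcomm ab b, hb_ab]; abel) (by rw [hfb, hgb, hfab, hgab]; decide)
  -- cc is nonzero
  have hcc0 : cc ≠ 0 := by
    intro h0
    have htr : ∀ y, (ρ a : Perm (V n)) y = y + a := by
      intro y
      show op a y = y + a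
      rw [hfor a y, h0, smul_zero, add_zero, add_comm]
    have hmem : (ρ a : Perm (V n)) ∈ T n ⊓ R := ⟨⟨a, trivial, htr⟩, (ρ a).2⟩
    rw [hint] at hmem
    obtain ⟨v, hv, hva⟩ := hmem
    have hav : a = v := by
      have h00 := hva 0
      rw [hρ0] at h00
      rw [h00, zero_add]
    rw [← hav] at hv
    have := ((hW a).1 hv).1
    rw [hfa] at this
    exact one_ne_zero this
  refine ⟨cc, hccW, hcc0, ?_⟩
  have hgen : ∀ v, (ρ v : Perm (V n)) = tperm f g cc ((hW cc).1 hccW).1 ((hW cc).1 hccW).2 v := by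
    intro v
    refine Equiv.ext fun y => ?_
    show op v y = tfun f g cc v y
    rw [hfor, tfun]
    abel
  ext p
  constructor
  · intro hp
    have hpar : (⟨p, hp⟩ : R) = ρ (p 0) := hρu _ _ rfl
    have hcoe : p = (ρ (p 0) : Perm (V n)) := congrArg Subtype.val hpar
    refine ⟨p 0, ?_⟩
    rw [hcoe, hρ0]
    exact hgen (p 0)
  · rintro ⟨v, rfl⟩
    rw [← hgen v]
    exact (ρ v).2

end Classify

end CardEAR

/-- For a fixed subspace `W ≤ V` with `dim W = n - 2`, the group `Sym(V)` contains
exactly `2^(n-2) - 1` elementary abelian regular subgroups `T'` with `T ∩ T' = σ_W`. -/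
theorem card_elemAbelianRegular_inter_eq_sigmaW
    (n : ℕ) (hn : 2 < n)
    (W : Submodule (ZMod 2) (V n)) (hdim : Module.finrank (ZMod 2) W = n - 2) :
    Nat.card {R : Subgroup (Equiv.Perm (V n)) //
        IsElemAbelianRegular n R ∧ T n ⊓ R = sigmaSub n W} = 2 ^ (n - 2) - 1 := by
  classical
  obtain ⟨f, g, hW, ⟨a, hfa, hga⟩, ⟨b, hfb, hgb⟩⟩ := CardEAR.exists_fg hn W hdim
  set Φ : {c : V n // c ∈ W ∧ c ≠ 0} →
      {R : Subgroup (Equiv.Perm (V n)) //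
        IsElemAbelianRegular n R ∧ T n ⊓ R = sigmaSub n W} :=
    fun c => ⟨CardEAR.Rsub f g ((hW c.1).1 c.2.1).1 ((hW c.1).1 c.2.1).2,
      CardEAR.isEAR_Rsub f g _ _,
      CardEAR.inter_Rsub f g _ _ hW hfa hga hfb hgb c.2.1 c.2.2⟩ with hΦ
  have hbij : Function.Bijective Φ := by
    constructor
    · rintro ⟨c, hcW, hc0⟩ ⟨c', hcW', hc0'⟩ h
      have hR : CardEAR.Rsub f g ((hW c).1 hcW).1 ((hW c).1 hcW).2
          = CardEAR.Rsub f g ((hW c').1 hcW').1 ((hW c').1 hcW').2 :=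
        congrArg Subtype.val h
      have hmem : CardEAR.tperm f g c ((hW c).1 hcW).1 ((hW c).1 hcW).2 a
          ∈ CardEAR.Rsub f g ((hW c').1 hcW').1 ((hW c').1 hcW').2 := by
        rw [← hR]; exact ⟨a, rfl⟩
      obtain ⟨v, hv⟩ := hmem
      have h0 := congrArg (fun p : Equiv.Perm (V n) => p 0) hv
      simp only [CardEAR.tperm_apply, map_zero, mul_zero, zero_mul, add_zero,
        zero_smul, zero_add] at h0
      subst h0
      have hb' := congrArg (fun p : Equiv.Perm (V n) => p b) hv
      simp only [CardEAR.tperm_apply, hfa, hga, hfb, hgb, one_mul, mul_one, mul_zero,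
        zero_mul, add_zero, zero_add, one_smul] at hb'
      exact Subtype.ext (add_left_cancel hb')
    · rintro ⟨R, ⟨h1, h2⟩, hint⟩
      obtain ⟨c, hcW, hc0, hReq⟩ :=
        CardEAR.classify f g hW hfa hga hfb hgb R h1 h2 hint
      exact ⟨⟨c, hcW, hc0⟩, Subtype.ext hReq.symm⟩
  rw [← Nat.card_eq_of_bijective Φ hbij]
  have e : {c : V n // c ∈ W ∧ c ≠ 0} ≃ {w : W // ¬ (w = 0)} :=
    { toFun := fun c => ⟨⟨c.1, c.2.1⟩, fun h => c.2.2 (by simpa using congrArg Subtype.val h)⟩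
      invFun := fun w => ⟨w.1.1, w.1.2, fun h => w.2 (Subtype.ext h)⟩
      left_inv := fun c => rfl
      right_inv := fun w => rfl }
  rw [Nat.card_congr e]
  letI : Fintype W := Fintype.ofFinite _
  rw [Nat.card_eq_fintype_card]
  have hcompl : Fintype.card {w : W // ¬ (w = 0)} = Fintype.card W - Fintype.card {w : W // w = 0} :=
    Fintype.card_subtype_compl _
  rw [hcompl, Fintype.card_subtype_eq (0 : W)]
  have hcardW : Fintype.card W = 2 ^ (n - 2) := by
    rw [Module.card_eq_pow_finrank (K := ZMod 2) (V := W), ZMod.card, hdim]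
  rw [hcardW]
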